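/- For all r ∈ (0,∞) and ε ∈ (0,1/2], the product function pr : ℝ² → ℝ, pr(x,y) = xy, satisfies Cost_{ReLU,1}(pr, [−r,r]², √8·r, ε) ≤ max{208, 320·log₂(r) + 160·log₂(ε^{−1}) + 48}, where the weight function is the constant function 1. Equivalently, there exists a skeleton φ whose ReLU-realization R_ReLU(φ) : ℝ² → ℝ is √8·r-Lipschitz on ℝ², satisfies sup_{(x,y)∈[−r,r]²} |xy − R_ReLU(φ)(x,y)| ≤ ε, and has P(φ) ≤ max{208, 320·log₂(r) + 160·log₂(ε^{−1}) + 48}. -/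

import Mathlib

open scoped BigOperators ENNReal

noncomputable section

/-- The rectified linear unit activation function. -/
def ReLU (x : ℝ) : ℝ := max x 0

/-- Truncation of a real sequence to its first `n` entries. -/
def trunc (n : ℕ) (x : ℕ → ℝ) : ℕ → ℝ := fun j => if j < n then x j else 0

/-- Embedding of a Euclidean vector into the space of real sequences. -/
def emb (n : ℕ) (x : EuclideanSpace ℝ (Fin n)) : ℕ → ℝ :=
  fun j => if h : j < n then x ⟨j, h⟩ else 0

/-- A neural network skeleton of depth `Dm + 1`.  The layer dimensions are
`l 0, …, l (Dm + 1)`; the weight matrix of layer `k + 1` is `V k` (a matrix of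
size `l (k+1) × l k`, stored as a doubly indexed sequence) and its bias is `b k`.
Entries beyond the relevant ranges are irrelevant junk. -/
structure NN where
  Dm : ℕ
  l : ℕ → ℕ
  V : ℕ → ℕ → ℕ → ℝ
  b : ℕ → ℕ → ℝ

namespace NN

/-- Depth `D(φ)` of a skeleton. -/
def depth (φ : NN) : ℕ := φ.Dm + 1

/-- Number of parameters `P(φ) = ∑_{k=1}^{D} l_k (l_{k-1} + 1)`. -/
def P (φ : NN) : ℕ := ∑ k ∈ Finset.range φ.depth, φ.l (k + 1) * (φ.l k + 1)

/-- The affine map `A_{k+1}(x) = V_{k+1} x + b_{k+1}` of a skeleton. -/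
def aff (φ : NN) (k : ℕ) (x : ℕ → ℝ) : ℕ → ℝ :=
  fun i => (∑ j ∈ Finset.range (φ.l k), φ.V k i j * x j) + φ.b k i

/-- State after `k` layers, with the activation applied after each affine map. -/
def hidden (a : ℝ → ℝ) (φ : NN) : ℕ → (ℕ → ℝ) → ℕ → ℝ
  | 0 => fun x => x
  | k + 1 => fun x i => a (φ.aff k (φ.hidden a k x) i)

/-- The `a`-realization `R_a(φ) = A_D ∘ a ∘ A_{D-1} ∘ ⋯ ∘ a ∘ A_1`, acting on
sequences (only the first `l 0` input coordinates and the first `l D` output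
coordinates are meaningful). -/
def fullReal (a : ℝ → ℝ) (φ : NN) (x : ℕ → ℝ) : ℕ → ℝ :=
  φ.aff φ.Dm (φ.hidden a φ.Dm (trunc (φ.l 0) x))

/-- The `a`-realization as a map `ℝ^m → ℝ^n` (meaningful when `l 0 = m` and
`l D = n`). -/
def realAs (a : ℝ → ℝ) (φ : NN) (m n : ℕ) (x : EuclideanSpace ℝ (Fin m)) :
    EuclideanSpace ℝ (Fin n) :=
  WithLp.toLp 2 fun (i : Fin n) => φ.fullReal a (emb m x) i

/-- The `a`-realization as a scalar-valued map `ℝ^m → ℝ`. -/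
def realScalar (a : ℝ → ℝ) (φ : NN) (m : ℕ) (x : EuclideanSpace ℝ (Fin m)) : ℝ :=
  φ.fullReal a (emb m x) 0

/-- The `a`-realization as a map `ℝ → ℝ`. -/
def real1 (a : ℝ → ℝ) (φ : NN) (x : ℝ) : ℝ :=
  φ.fullReal a (fun j => if j = 0 then x else 0) 0

/-- Concatenation `ψ ∘ φ` of two skeletons (meaningful when
`l_{D(φ)}(φ) = l_0(ψ)`). -/
def comp (ψ φ : NN) : NN where
  Dm := φ.Dm + ψ.Dm
  l := fun k => if k < φ.depth then φ.l k else ψ.l (k + 1 - φ.depth)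
  V := fun k =>
    if k < φ.Dm then φ.V k
    else if k = φ.Dm then fun i j => ∑ m ∈ Finset.range (ψ.l 0), ψ.V 0 i m * φ.V φ.Dm m j
    else ψ.V (k - φ.Dm)
  b := fun k =>
    if k < φ.Dm then φ.b k
    else if k = φ.Dm then
      fun i => (∑ m ∈ Finset.range (ψ.l 0), ψ.V 0 i m * φ.b φ.Dm m) + ψ.b 0 i
    else ψ.b (k - φ.Dm)

/-- Offset of the `q`-th block in layer `k` of a parallelization. -/
def poff (ν : ℕ → NN) (k q : ℕ) : ℕ := ∑ j ∈ Finset.range q, (ν j).l k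

/-- Parallelization `p(φ_1, …, φ_n)` of `n` skeletons (meaningful when they all
have the same depth): block-diagonal weight matrices and concatenated biases. -/
def parallel (n : ℕ) (ν : ℕ → NN) : NN where
  Dm := (ν 0).Dm
  l := fun k => ∑ j ∈ Finset.range n, (ν j).l k
  V := fun k i j =>
    ∑ q ∈ Finset.range n,
      if poff ν (k + 1) q ≤ i ∧ i < poff ν (k + 1) q + (ν q).l (k + 1) ∧
          poff ν k q ≤ j ∧ j < poff ν k q + (ν q).l k then
        (ν q).V k (i - poff ν (k + 1) q) (j - poff ν k q)
      else 0
  b := fun k i =>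
    ∑ q ∈ Finset.range n,
      if poff ν (k + 1) q ≤ i ∧ i < poff ν (k + 1) q + (ν q).l (k + 1) then
        (ν q).b k (i - poff ν (k + 1) q)
      else 0

/-- The activation `a` fulfills the `c`-identity requirement, witnessed by the
skeleton `I`: `I` has depth 2, input and output dimension 1, hidden dimension
at most `c`, and its `a`-realization is the identity on `ℝ`. -/
def IdReq (a : ℝ → ℝ) (c : ℝ) (I : NN) : Prop :=
  I.Dm = 1 ∧ I.l 0 = 1 ∧ I.l 2 = 1 ∧ (I.l 1 : ℝ) ≤ c ∧
    ∀ x : ℕ → ℝ, I.fullReal a x 0 = x 0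

/-- The `d`-fold parallelization `I_d` of an identity skeleton. -/
def Idn (I : NN) (d : ℕ) : NN := parallel d fun _ => I

/-- Concatenate `m` identity networks after `φ`. -/
def padAfter (I φ : NN) : ℕ → NN
  | 0 => φ
  | m + 1 => comp (Idn I ((padAfter I φ m).l (padAfter I φ m).depth)) (padAfter I φ m)

/-- Concatenate `m` identity networks in front of `φ`. -/
def padBefore (I φ : NN) : ℕ → NN
  | 0 => φ
  | m + 1 => comp (padBefore I φ m) (Idn I ((padBefore I φ m).l 0))

/-- Diagonal ("staggered") parallelization `p_I(φ_1, …, φ_n)` of arbitrary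
skeletons, obtained by padding each `φ_q` with identity networks so that all
have equal depth and then parallelizing. -/
def dpar (I : NN) (n : ℕ) (ν : ℕ → NN) : NN :=
  parallel n fun q =>
    padAfter I (padBefore I (ν q) (∑ j ∈ Finset.range q, (ν j).depth))
      (∑ j ∈ Finset.Ico (q + 1) n, (ν j).depth)

end NN

/-- A continuous function `ℝ^m → ℝ^n`, as a member of a catalog. -/
structure CatFun where
  inDim : ℕ
  outDim : ℕ
  toFun : EuclideanSpace ℝ (Fin inDim) → EuclideanSpace ℝ (Fin outDim)
  cont : Continuous toFun

/-- Approximation cost `Cost_{a,w}(g, E, L, ε)`: the infimum of the number of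
parameters over all skeletons realizing an `L`-Lipschitz map `ℝ^{in} → ℝ^{out}`
that approximates `g` on `E` to accuracy `ε` with respect to the weight `w`. -/
def Cost (a : ℝ → ℝ) (w : ℝ → ℝ) (g : CatFun)
    (E : Set (EuclideanSpace ℝ (Fin g.inDim))) (L ε : ℝ) : ℝ≥0∞ :=
  ⨅ (φ : NN) (_ : φ.l 0 = g.inDim ∧ φ.l φ.depth = g.outDim ∧
      (∀ x y : EuclideanSpace ℝ (Fin g.inDim),
        ‖φ.realAs a g.inDim g.outDim x - φ.realAs a g.inDim g.outDim y‖ ≤ L * ‖x - y‖) ∧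
      ∀ x ∈ E, w ‖x‖ * ‖g.toFun x - φ.realAs a g.inDim g.outDim x‖ ≤ ε),
    (φ.P : ℝ≥0∞)

/-- The catalog `F` is `(w, ε, κ)`-approximable with approximation sets `E`
(each containing `0`) and Lipschitz constants `L` (nonnegative). -/
def Approximable (a w : ℝ → ℝ) (F : Set CatFun)
    (E : (g : CatFun) → Set (EuclideanSpace ℝ (Fin g.inDim))) (L : CatFun → ℝ)
    (ε κ₀ κ₁ κ₂ κ₃ : ℝ) : Prop :=
  (∀ g ∈ F, (0 : EuclideanSpace ℝ (Fin g.inDim)) ∈ E g) ∧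
  (∀ g ∈ F, 0 ≤ L g) ∧
  (∀ g ∈ F, ‖g.toFun 0‖ ≤ κ₀) ∧
  ∀ g ∈ F, ∀ δ : ℝ, 0 < δ → δ ≤ ε →
    Cost a w g (E g) (L g) δ ≤
      ENNReal.ofReal (κ₁ * (max g.inDim g.outDim : ℝ) ^ κ₂ * δ ^ (-κ₃))

/-- The catalog `F` is `(w, ε, κ)`-log-approximable. -/
def LogApproximable (a w : ℝ → ℝ) (F : Set CatFun)
    (E : (g : CatFun) → Set (EuclideanSpace ℝ (Fin g.inDim))) (L : CatFun → ℝ)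
    (ε κ₀ κ₁ κ₂ κ₃ : ℝ) : Prop :=
  (∀ g ∈ F, (0 : EuclideanSpace ℝ (Fin g.inDim)) ∈ E g) ∧
  (∀ g ∈ F, 0 ≤ L g) ∧
  (∀ g ∈ F, ‖g.toFun 0‖ ≤ κ₀) ∧
  ∀ g ∈ F, ∀ δ : ℝ, 0 < δ → δ ≤ ε →
    Cost a w g (E g) (L g) δ ≤
      ENNReal.ofReal (κ₁ * (max g.inDim g.outDim : ℝ) ^ κ₂ * Real.logb 2 δ⁻¹ ^ κ₃)

/-- A catalog network of depth `Dm + 1` with dimensions `l 0, …, l (2(Dm+1))`: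
layer `k + 1` consists of the affine map with matrix `V k` (size
`l (2k+1) × l (2k)`) and bias `b k`, followed by the componentwise application
of the catalog functions `f k 0, …, f k (n k - 1)`. -/
structure CatNN where
  Dm : ℕ
  l : ℕ → ℕ
  V : ℕ → ℕ → ℕ → ℝ
  b : ℕ → ℕ → ℝ
  n : ℕ → ℕ
  f : ℕ → ℕ → CatFun
  hn : ∀ k ≤ Dm, 0 < n k
  hin : ∀ k ≤ Dm, ∑ j ∈ Finset.range (n k), (f k j).inDim = l (2 * k + 1)
  hout : ∀ k ≤ Dm, ∑ j ∈ Finset.range (n k), (f k j).outDim = l (2 * k + 2)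

namespace CatNN

/-- Depth `D(ξ)` of a catalog network. -/
def depth (ξ : CatNN) : ℕ := ξ.Dm + 1

/-- Maximal width `W(ξ) = max (l 0, …, l (2D))`. -/
def width (ξ : CatNN) : ℕ := (Finset.range (2 * ξ.depth + 1)).sup ξ.l

/-- Input offset of the `j`-th catalog function in layer `k + 1`. -/
def offIn (ξ : CatNN) (k j : ℕ) : ℕ := ∑ i ∈ Finset.range j, (ξ.f k i).inDim

/-- Output offset of the `j`-th catalog function in layer `k + 1`. -/
def offOut (ξ : CatNN) (k j : ℕ) : ℕ := ∑ i ∈ Finset.range j, (ξ.f k i).outDim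

/-- The affine part `A_{k+1}(x) = V_{k+1} x + b_{k+1}` of layer `k + 1`. -/
def aff (ξ : CatNN) (k : ℕ) (x : ℕ → ℝ) : ℕ → ℝ :=
  fun i => (∑ j ∈ Finset.range (ξ.l (2 * k)), ξ.V k i j * x j) + ξ.b k i

/-- The nonlinear part `M_{k+1}` of layer `k + 1`: applies `f k 0` to the first
`in (f k 0)` coordinates, `f k 1` to the next `in (f k 1)` coordinates, etc. -/
def M (ξ : CatNN) (k : ℕ) (x : ℕ → ℝ) : ℕ → ℝ := fun i =>
  ∑ j ∈ Finset.range (ξ.n k),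
    if h : ξ.offOut k j ≤ i ∧ i < ξ.offOut k j + (ξ.f k j).outDim then
      (ξ.f k j).toFun (WithLp.toLp 2 fun (m : Fin (ξ.f k j).inDim) => x (ξ.offIn k j + (m : ℕ))) ⟨i - ξ.offOut k j, by omega⟩
    else 0

/-- Forward pass through the first `k` layers of a catalog network. -/
def fwd (ξ : CatNN) : ℕ → (ℕ → ℝ) → ℕ → ℝ
  | 0 => fun x => x
  | k + 1 => fun x => ξ.M k (ξ.aff k (ξ.fwd k x))

/-- The realization `R(ξ) : ℝ^{l 0} → ℝ^{l (2D)}` of a catalog network. -/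
def realize (ξ : CatNN) (x : EuclideanSpace ℝ (Fin (ξ.l 0))) :
    EuclideanSpace ℝ (Fin (ξ.l (2 * ξ.depth))) :=
  WithLp.toLp 2 fun (i : Fin (ξ.l (2 * ξ.depth))) => ξ.fwd ξ.depth (emb (ξ.l 0) x) i

/-- The nonlinear part `M_{k+1}` as a map `ℝ^{l (2k+1)} → ℝ^{l (2k+2)}`. -/
def layerMap (ξ : CatNN) (k : ℕ) (x : EuclideanSpace ℝ (Fin (ξ.l (2 * k + 1)))) :
    EuclideanSpace ℝ (Fin (ξ.l (2 * k + 2))) :=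
  WithLp.toLp 2 fun (i : Fin (ξ.l (2 * k + 2))) => ξ.M k (emb (ξ.l (2 * k + 1)) x) i

/-- Membership in the product set `E_{k+1}(ξ) = E_{f k 0} × ⋯ × E_{f k (n k - 1)}`. -/
def memE (ξ : CatNN) (E : (g : CatFun) → Set (EuclideanSpace ℝ (Fin g.inDim)))
    (k : ℕ) (x : ℕ → ℝ) : Prop :=
  ∀ j < ξ.n k, WithLp.toLp 2 (fun m : Fin (ξ.f k j).inDim => x (ξ.offIn k j + (m : ℕ))) ∈ E (ξ.f k j)

/-- The admissible domain `A(ξ)` on which the catalog network can be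
approximated. -/
def admissible (ξ : CatNN)
    (E : (g : CatFun) → Set (EuclideanSpace ℝ (Fin g.inDim))) :
    Set (EuclideanSpace ℝ (Fin (ξ.l 0))) :=
  {x | ∀ k ≤ ξ.Dm, ξ.memE E k (ξ.aff k (ξ.fwd k (emb (ξ.l 0) x)))}

/-- The Lipschitz constant `Lip_{k+1}(ξ) = max_j L (f k j)` of layer `k + 1`. -/
def LipLayer (ξ : CatNN) (L : CatFun → ℝ) (k : ℕ) : ℝ :=
  if h : (Finset.range (ξ.n k)).Nonempty then
    (Finset.range (ξ.n k)).sup' h fun j => L (ξ.f k j)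
  else 0

set_option synthInstance.maxHeartbeats 400000 in
/-- Operator norm `‖V_{k+1}‖` of the weight matrix of layer `k + 1`. -/
def Vnorm (ξ : CatNN) (k : ℕ) : ℝ :=
  ‖LinearMap.toContinuousLinearMap (Matrix.toEuclideanLin
    (Matrix.of fun (i : Fin (ξ.l (2 * k + 1))) (j : Fin (ξ.l (2 * k))) => ξ.V k i j))‖

/-- The worst-case Lipschitz constant `Lip(ξ) = ∏_k Lip_k(ξ) ‖V_k‖`. -/
def LipTotal (ξ : CatNN) (L : CatFun → ℝ) : ℝ :=
  ∏ k ∈ Finset.range ξ.depth, ξ.LipLayer L k * ξ.Vnorm k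

/-- Euclidean norm `‖b_{k+1}‖` of the bias of layer `k + 1`. -/
def bnorm (ξ : CatNN) (k : ℕ) : ℝ :=
  ‖(show EuclideanSpace ℝ (Fin (ξ.l (2 * k + 1))) from WithLp.toLp 2 fun (i : Fin (ξ.l (2 * k + 1))) => ξ.b k i)‖

/-- The translation size `B(ξ) = max {1, ‖b_1‖, …, ‖b_D‖}`. -/
def B (ξ : CatNN) : ℝ :=
  max 1 ((Finset.range ξ.depth).sup'
    ⟨0, Finset.mem_range.mpr (Nat.succ_pos ξ.Dm)⟩ ξ.bnorm)

/-- The quantity `Λ(ξ)` combining the Lipschitz constants of the affine and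
nonlinear parts of the layers (with the convention `Lip_0(ξ) = 0`). -/
def Lambda (ξ : CatNN) (L : CatFun → ℝ) : ℝ :=
  max 1 ((Finset.range ξ.depth).sup'
    ⟨0, Finset.mem_range.mpr (Nat.succ_pos ξ.Dm)⟩ fun K =>
      max 1 (max (if K = 0 then 0 else ξ.LipLayer L (K - 1)) (ξ.LipLayer L ξ.Dm)) *
        ξ.Vnorm ξ.Dm * ∏ j ∈ Finset.Ico K ξ.Dm, ξ.LipLayer L j * ξ.Vnorm j)

/-- The catalog network `ξ` is a catalog network over the catalog `F`. -/
def overCat (ξ : CatNN) (F : Set CatFun) : Prop :=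
  ∀ k ≤ ξ.Dm, ∀ j < ξ.n k, ξ.f k j ∈ F

end CatNN

/-- The product function `pr(x, y) = x y` as a catalog function. -/
def prodFun : CatFun where
  inDim := 2
  outDim := 1
  toFun := fun x => WithLp.toLp 2 fun _ => x 0 * x 1
  cont := by fun_prop

lemma ReLU_of_nonneg {x : ℝ} (h : 0 ≤ x) : ReLU x = x := max_eq_left h
lemma ReLU_of_nonpos {x : ℝ} (h : x ≤ 0) : ReLU x = 0 := max_eq_right h
lemma ReLU_nonneg (x : ℝ) : 0 ≤ ReLU x := le_max_right _ _
lemma ReLU_add_ReLU_neg (x : ℝ) : ReLU x + ReLU (-x) = |x| := by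
  rcases le_total x 0 with h | h
  · rw [ReLU_of_nonpos h, ReLU_of_nonneg (by linarith), abs_of_nonpos h]; ring
  · rw [ReLU_of_nonneg h, ReLU_of_nonpos (by linarith), abs_of_nonneg h]; ring
lemma ReLU_lip (x y : ℝ) : |ReLU x - ReLU y| ≤ |x - y| := by
  have := abs_max_sub_max_le_abs x y 0
  simpa [ReLU] using this

def saw (t : ℝ) : ℝ := 2 * ReLU t - 4 * ReLU (t - 1/2) + 2 * ReLU (t - 1)

lemma saw_eq (t : ℝ) : saw t = 2 * max (min t (1 - t)) 0 := by
  rcases le_total t 0 with h | h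
  · rw [min_eq_left (by linarith), max_eq_right h]
    rw [saw, ReLU_of_nonpos h, ReLU_of_nonpos (by linarith : t - 1/2 ≤ 0),
      ReLU_of_nonpos (by linarith : t - 1 ≤ 0)]; ring
  · rcases le_total t (1/2) with h2 | h2
    · rw [min_eq_left (by linarith), max_eq_left h]
      rw [saw, ReLU_of_nonneg h, ReLU_of_nonpos (by linarith : t - 1/2 ≤ 0),
        ReLU_of_nonpos (by linarith : t - 1 ≤ 0)]; ring
    · rcases le_total t 1 with h3 | h3
      · rw [min_eq_right (by linarith), max_eq_left (by linarith)]
        rw [saw, ReLU_of_nonneg (by linarith), ReLU_of_nonneg (by linarith),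
          ReLU_of_nonpos (by linarith : t - 1 ≤ 0)]; ring
      · rw [min_eq_right (by linarith), max_eq_right (by linarith)]
        rw [saw, ReLU_of_nonneg (by linarith), ReLU_of_nonneg (by linarith),
          ReLU_of_nonneg (by linarith)]; ring

lemma saw_nonneg (t : ℝ) : 0 ≤ saw t := by rw [saw_eq]; positivity
lemma saw_le_one (t : ℝ) : saw t ≤ 1 := by
  rw [saw_eq]
  rcases le_total t (1 - t) with h | h
  · rcases le_total t 0 with h0 | h0
    · rw [min_eq_left h, max_eq_right h0]; norm_num
    · rw [min_eq_left h, max_eq_left h0]; linarith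
  · rw [min_eq_right h]
    rcases le_total (1 - t) 0 with h0 | h0
    · rw [max_eq_right h0]; norm_num
    · rw [max_eq_left h0]; linarith
lemma saw_of_one_le {t : ℝ} (h : 1 ≤ t) : saw t = 0 := by
  rw [saw_eq, min_eq_right (by linarith), max_eq_right (by linarith)]; ring
lemma saw_zero : saw 0 = 0 := by rw [saw_eq]; norm_num
lemma saw_lip (x y : ℝ) : |saw x - saw y| ≤ 2 * |x - y| := by
  rw [saw_eq, saw_eq, ← mul_sub, abs_mul, abs_two]
  have h1 : |max (min x (1-x)) 0 - max (min y (1-y)) 0| ≤ |min x (1-x) - min y (1-y)| :=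
    abs_max_sub_max_le_abs _ _ 0
  have h2 : |min x (1-x) - min y (1-y)| ≤ |x - y| := by
    refine (abs_min_sub_min_le_max x (1-x) y (1-y)).trans ?_
    simp only [max_le_iff]
    refine ⟨le_refl _, ?_⟩
    rw [show (1-x) - (1-y) = -(x - y) by ring, abs_neg]
  nlinarith [abs_nonneg (x - y)]

def sawIter : ℕ → ℝ → ℝ
  | 0, t => t
  | k+1, t => saw (sawIter k t)

lemma sawIter_mem {t : ℝ} (ht : 0 ≤ t) (ht1 : t ≤ 1) (k : ℕ) :
    0 ≤ sawIter k t ∧ sawIter k t ≤ 1 := by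
  induction k with
  | zero => exact ⟨ht, ht1⟩
  | succ n ih => exact ⟨saw_nonneg _, saw_le_one _⟩

lemma sawIter_succ_of_one_le {t : ℝ} (h : 1 ≤ t) (k : ℕ) : sawIter (k+1) t = 0 := by
  induction k with
  | zero => exact saw_of_one_le h
  | succ n ih => show saw (sawIter (n+1) t) = 0; rw [ih, saw_zero]

lemma sawIter_lip (k : ℕ) (x y : ℝ) : |sawIter k x - sawIter k y| ≤ 2^k * |x - y| := by
  induction k with
  | zero => simp [sawIter]
  | succ n ih =>
    calc |sawIter (n+1) x - sawIter (n+1) y| ≤ 2 * |sawIter n x - sawIter n y| := saw_lip _ _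
    _ ≤ 2 * (2^n * |x - y|) := by linarith
    _ = 2^(n+1) * |x - y| := by ring

def fApp (N : ℕ) (t : ℝ) : ℝ := ReLU t - ∑ j ∈ Finset.range N, sawIter (j+1) t / 4^(j+1)

lemma fApp_succ (N : ℕ) (t : ℝ) :
    fApp (N+1) t = fApp N t - sawIter (N+1) t / 4^(N+1) := by
  rw [fApp, fApp, Finset.sum_range_succ]; ring

lemma saw_key {u : ℝ} (h0 : 0 ≤ u) (h1 : u ≤ 1) :
    4 * (u - u^2) - saw u = saw u - (saw u)^2 := by
  rw [saw_eq]
  rcases le_total u (1 - u) with h | h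
  · rw [min_eq_left h, max_eq_left h0]; ring
  · rw [min_eq_right h, max_eq_left (by linarith)]; ring

lemma fApp_sq {t : ℝ} (h0 : 0 ≤ t) (h1 : t ≤ 1) (N : ℕ) :
    fApp N t = t^2 + (sawIter N t - (sawIter N t)^2) / 4^N := by
  induction N with
  | zero =>
    simp only [fApp, Finset.range_zero, Finset.sum_empty, sub_zero, pow_zero,
      ReLU_of_nonneg h0, div_one]
    show t = t^2 + (t - t^2)
    ring
  | succ n ih =>
    obtain ⟨hu0, hu1⟩ := sawIter_mem h0 h1 n
    have key := saw_key hu0 hu1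
    rw [fApp_succ, ih]
    show _ = t^2 + (saw (sawIter n t) - (saw (sawIter n t))^2) / 4^(n+1)
    have hs : sawIter (n+1) t = saw (sawIter n t) := rfl
    rw [hs]
    linear_combination key / 4^(n+1)

lemma fApp_err {t : ℝ} (h0 : 0 ≤ t) (h1 : t ≤ 1) (N : ℕ) :
    0 ≤ fApp N t - t^2 ∧ fApp N t - t^2 ≤ 1 / 4^(N+1) := by
  obtain ⟨hu0, hu1⟩ := sawIter_mem h0 h1 N
  rw [fApp_sq h0 h1]
  set u := sawIter N t
  have h4 : (0:ℝ) < 4^N := by positivity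
  constructor
  · have : 0 ≤ u - u^2 := by nlinarith
    have := div_nonneg this h4.le
    linarith
  · have hq : u - u^2 ≤ 1/4 := by nlinarith [sq_nonneg (u - 1/2)]
    rw [show t^2 + (u - u^2)/4^N - t^2 = (u - u^2)/4^N by ring]
    have : (u - u^2)/4^N ≤ (1/4)/4^N := by gcongr
    refine this.trans (le_of_eq ?_)
    rw [pow_succ]
    ring

lemma fApp_nonneg {t : ℝ} (h0 : 0 ≤ t) (N : ℕ) : 0 ≤ fApp N t := by
  rcases le_total t 1 with h1 | h1
  · have := (fApp_err h0 h1 N).1; nlinarith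
  · have : fApp N t = t := by
      rw [fApp, ReLU_of_nonneg h0]
      rw [Finset.sum_eq_zero, sub_zero]
      intro j _; rw [sawIter_succ_of_one_le h1]; simp
    linarith

lemma geom_half (N : ℕ) : ∑ j ∈ Finset.range N, ((1:ℝ)/2)^(j+1) = 1 - (1/2)^N := by
  induction N with
  | zero => simp
  | succ n ih => rw [Finset.sum_range_succ, ih]; ring

lemma fApp_lip (N : ℕ) (x y : ℝ) : |fApp N x - fApp N y| ≤ 2 * |x - y| := by
  have h1 : fApp N x - fApp N y =
      (ReLU x - ReLU y) - ∑ j ∈ Finset.range N, (sawIter (j+1) x - sawIter (j+1) y) / 4^(j+1) := by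
    simp only [fApp, sub_div, Finset.sum_sub_distrib]
    ring
  rw [h1]
  have h2 : |∑ j ∈ Finset.range N, (sawIter (j+1) x - sawIter (j+1) y) / 4^(j+1)| ≤ |x - y| := by
    refine (Finset.abs_sum_le_sum_abs _ _).trans ?_
    have h3 : ∀ j ∈ Finset.range N, |(sawIter (j+1) x - sawIter (j+1) y) / 4^(j+1)| ≤
        ((1:ℝ)/2)^(j+1) * |x - y| := by
      intro j _
      rw [abs_div, abs_of_nonneg (by positivity : (0:ℝ) ≤ 4^(j+1)), div_le_iff₀ (by positivity)]
      calc |sawIter (j+1) x - sawIter (j+1) y| ≤ 2^(j+1) * |x - y| := sawIter_lip _ _ _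
      _ = (1/2)^(j+1) * |x - y| * 4^(j+1) := by
          rw [show ((1:ℝ)/2)^(j+1) * |x-y| * 4^(j+1) = ((1/2)*4)^(j+1) * |x-y| by rw [mul_pow]; ring]
          norm_num
    refine (Finset.sum_le_sum h3).trans ?_
    rw [← Finset.sum_mul, geom_half]
    have : (0:ℝ) ≤ (1/2)^N := by positivity
    nlinarith [abs_nonneg (x - y)]
  calc |(ReLU x - ReLU y) - _| ≤ |ReLU x - ReLU y| + |∑ j ∈ Finset.range N, (sawIter (j+1) x - sawIter (j+1) y) / 4^(j+1)| := abs_sub _ _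
  _ ≤ |x - y| + |x - y| := add_le_add (ReLU_lip x y) h2
  _ = 2 * |x - y| := by ring
/-! ### The explicit product network -/

def V0 (m : ℝ) : ℕ → ℕ → ℝ := fun i j =>
  if i = 0 then 1/m
  else if i = 1 then -(1/m)
  else if i = 2 then (if j = 0 then 1/m else -(1/m))
  else (if j = 0 then -(1/m) else 1/m)

def V1 : ℕ → ℕ → ℝ := fun i j =>
  if (i < 4 ∧ j < 2) ∨ (4 ≤ i ∧ 2 ≤ j ∧ j < 4) then 1 else 0

def bmid : ℕ → ℝ := fun i =>
  if i = 1 ∨ i = 5 then -(1/2) else if i = 2 ∨ i = 6 then -1 else 0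

def Vmid (c : ℝ) : ℕ → ℕ → ℝ := fun i j =>
  if i % 4 ≤ 2 then
    (if j = 4*(i/4) then 2 else if j = 4*(i/4)+1 then -4
      else if j = 4*(i/4)+2 then 2 else 0)
  else
    (if j = 4*(i/4) then -2/c else if j = 4*(i/4)+1 then 4/c
      else if j = 4*(i/4)+2 then -2/c else if j = 4*(i/4)+3 then 1 else 0)

def Vout (c m : ℝ) : ℕ → ℕ → ℝ := fun _ j =>
  m^2/4 * (if j = 0 then -2/c else if j = 1 then 4/c else if j = 2 then -2/c
    else if j = 3 then 1 else if j = 4 then 2/c else if j = 5 then -4/c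
    else if j = 6 then 2/c else -1)

def mkNN (M : ℕ) (m : ℝ) : NN where
  Dm := M + 2
  l := fun k => if k = 0 then 2 else if k = 1 then 4 else if k = M + 3 then 1 else 8
  V := fun k => if k = 0 then V0 m else if k = 1 then V1
    else if k = M + 2 then Vout (4^(M+1)) m else Vmid (4^(k-1))
  b := fun k i => if k = 0 ∨ k = M + 2 then 0 else bmid i

section mkNNlemmas
variable (M : ℕ) (m : ℝ)

lemma mk_l0 : (mkNN M m).l 0 = 2 := rfl
lemma mk_l1 : (mkNN M m).l 1 = 4 := rfl
lemma mk_lmid {k : ℕ} (h2 : 2 ≤ k) (hk : k ≤ M + 2) : (mkNN M m).l k = 8 := by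
  show (if k = 0 then 2 else if k = 1 then 4 else if k = M + 3 then 1 else 8) = 8
  rw [if_neg (by omega), if_neg (by omega), if_neg (by omega)]
lemma mk_lout : (mkNN M m).l (M + 3) = 1 := by
  show (if M + 3 = 0 then 2 else if M + 3 = 1 then 4 else if M + 3 = M + 3 then 1 else 8) = 1
  rw [if_neg (by omega), if_neg (by omega), if_pos rfl]
lemma mk_V0 : (mkNN M m).V 0 = V0 m := rfl
lemma mk_V1 : (mkNN M m).V 1 = V1 := by
  simp only [mkNN]
  norm_num
lemma mk_Vmid {k : ℕ} (h2 : 2 ≤ k) (hk : k ≤ M + 1) :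
    (mkNN M m).V k = Vmid (4^(k-1)) := by
  show (if k = 0 then _ else if k = 1 then _ else if k = M + 2 then _ else _) = _
  rw [if_neg (by omega), if_neg (by omega), if_neg (by omega)]
lemma mk_Vout : (mkNN M m).V (M + 2) = Vout (4^(M+1)) m := by
  simp only [mkNN]
  rw [if_neg (by omega), if_neg (by omega)]
  simp
lemma mk_b0 (i : ℕ) : (mkNN M m).b 0 i = 0 := by
  show (if (0:ℕ) = 0 ∨ (0:ℕ) = M + 2 then (0:ℝ) else bmid i) = 0
  rw [if_pos (Or.inl rfl)]
lemma mk_bmid {k : ℕ} (h1 : 1 ≤ k) (hk : k ≤ M + 1) (i : ℕ) :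
    (mkNN M m).b k i = bmid i := by
  show (if k = 0 ∨ k = M + 2 then (0:ℝ) else bmid i) = bmid i
  rw [if_neg (by omega)]
lemma mk_bout (i : ℕ) : (mkNN M m).b (M + 2) i = 0 := by
  show (if M + 2 = 0 ∨ M + 2 = M + 2 then (0:ℝ) else bmid i) = 0
  rw [if_pos (Or.inr rfl)]

end mkNNlemmas

/-- Expected hidden state after layer `k+2`. -/
def ES (tu tv : ℝ) (k : ℕ) : ℕ → ℝ := fun i =>
  if i = 0 then ReLU (sawIter k tu) else if i = 1 then ReLU (sawIter k tu - 1/2)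
  else if i = 2 then ReLU (sawIter k tu - 1) else if i = 3 then fApp k tu
  else if i = 4 then ReLU (sawIter k tv) else if i = 5 then ReLU (sawIter k tv - 1/2)
  else if i = 6 then ReLU (sawIter k tv - 1) else fApp k tv

lemma hidden_one (M : ℕ) {m : ℝ} (x : ℕ → ℝ) :
    ∀ i, NN.hidden ReLU (mkNN M m) 1 x i =
      (if i = 0 then ReLU ((x 0 + x 1)/m) else if i = 1 then ReLU (-((x 0 + x 1)/m))
        else if i = 2 then ReLU ((x 0 - x 1)/m) else ReLU (-((x 0 - x 1)/m))) := by
  intro i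
  show ReLU ((mkNN M m).aff 0 x i) = _
  rw [NN.aff, mk_l0, mk_V0, mk_b0, Finset.sum_range_succ, Finset.sum_range_one]
  rcases Nat.lt_or_ge i 4 with hi | hi
  · interval_cases i <;>
    · simp only [V0]
      norm_num
      congr 1
      ring
  · have h0 : i ≠ 0 := by omega
    have h1 : i ≠ 1 := by omega
    have h2 : i ≠ 2 := by omega
    simp only [V0, if_neg h0, if_neg h1, if_neg h2]
    norm_num
    congr 1
    ring
lemma sawIter_succ (k : ℕ) (t : ℝ) : sawIter (k+1) t = saw (sawIter k t) := rfl
lemma fApp_zero (t : ℝ) : fApp 0 t = ReLU t := by simp [fApp]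

lemma hidden_state (M : ℕ) {m : ℝ} (hm : 0 < m) (x : ℕ → ℝ) :
    ∀ k, k ≤ M → ∀ i, i < 8 →
      NN.hidden ReLU (mkNN M m) (k+2) x i = ES (|x 0 + x 1|/m) (|x 0 - x 1|/m) k i := by
  set tu := |x 0 + x 1|/m with htu
  set tv := |x 0 - x 1|/m with htv
  have htu0 : 0 ≤ tu := by rw [htu]; positivity
  have htv0 : 0 ≤ tv := by rw [htv]; positivity
  have habs_u : ReLU ((x 0 + x 1)/m) + ReLU (-((x 0 + x 1)/m)) = tu := by
    rw [ReLU_add_ReLU_neg, htu, abs_div, abs_of_pos hm]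
  have habs_v : ReLU ((x 0 - x 1)/m) + ReLU (-((x 0 - x 1)/m)) = tv := by
    rw [ReLU_add_ReLU_neg, htv, abs_div, abs_of_pos hm]
  intro k
  induction k with
  | zero =>
    intro _ i hi
    show ReLU ((mkNN M m).aff 1 (NN.hidden ReLU (mkNN M m) 1 x) i) = _
    rw [NN.aff, mk_l1, mk_V1, mk_bmid M m (by omega) (by omega)]
    rw [Finset.sum_range_succ, Finset.sum_range_succ, Finset.sum_range_succ,
      Finset.sum_range_one]
    simp only [hidden_one]
    norm_num
    interval_cases i <;>
      simp only [ES, V1, bmid, sawIter, fApp_zero] <;> norm_num <;>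
      simp only [habs_u, habs_v] <;> first | rfl | (congr 1; ring)
  | succ k ih =>
    intro hk1 i hi
    have ihh := ih (by omega)
    show ReLU ((mkNN M m).aff (k+2) (NN.hidden ReLU (mkNN M m) (k+2) x) i) = _
    rw [NN.aff, mk_lmid M m (by omega) (by omega), mk_Vmid M m (by omega) (by omega),
      mk_bmid M m (by omega) (by omega)]
    rw [Finset.sum_range_succ, Finset.sum_range_succ, Finset.sum_range_succ,
      Finset.sum_range_succ, Finset.sum_range_succ, Finset.sum_range_succ,
      Finset.sum_range_succ, Finset.sum_range_one]
    rw [ihh 0 (by norm_num), ihh 1 (by norm_num), ihh 2 (by norm_num),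
      ihh 3 (by norm_num), ihh 4 (by norm_num), ihh 5 (by norm_num),
      ihh 6 (by norm_num), ihh 7 (by norm_num)]
    have hsub : k + 2 - 1 = k + 1 := by omega
    rw [hsub]
    interval_cases i
    · simp only [Vmid, ES, bmid, sawIter_succ]; norm_num
      rw [saw]; congr 1 <;> ring
    · simp only [Vmid, ES, bmid, sawIter_succ]; norm_num
      rw [saw]; congr 1 <;> ring
    · simp only [Vmid, ES, bmid, sawIter_succ]; norm_num
      rw [saw]; congr 1 <;> ring
    · simp only [Vmid, ES, bmid]; norm_num
      rw [show (-2/(4:ℝ)^(k+1) * ReLU (sawIter k tu) + 4/4^(k+1) * ReLU (sawIter k tu - 1/2)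
          + -2/4^(k+1) * ReLU (sawIter k tu - 1) + fApp k tu)
          = fApp (k+1) tu by rw [fApp_succ, sawIter_succ, saw]; ring]
      exact ReLU_of_nonneg (fApp_nonneg htu0 _)
    · simp only [Vmid, ES, bmid, sawIter_succ]; norm_num
      rw [saw]; congr 1 <;> ring
    · simp only [Vmid, ES, bmid, sawIter_succ]; norm_num
      rw [saw]; congr 1 <;> ring
    · simp only [Vmid, ES, bmid, sawIter_succ]; norm_num
      rw [saw]; congr 1 <;> ring
    · simp only [Vmid, ES, bmid]; norm_num
      rw [show (-2/(4:ℝ)^(k+1) * ReLU (sawIter k tv) + 4/4^(k+1) * ReLU (sawIter k tv - 1/2)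
          + -2/4^(k+1) * ReLU (sawIter k tv - 1) + fApp k tv)
          = fApp (k+1) tv by rw [fApp_succ, sawIter_succ, saw]; ring]
      exact ReLU_of_nonneg (fApp_nonneg htv0 _)
lemma fullReal_eq (M : ℕ) {m : ℝ} (hm : 0 < m) (x : ℕ → ℝ) :
    (mkNN M m).fullReal ReLU x 0 =
      m^2/4 * (fApp (M+1) (|x 0 + x 1|/m) - fApp (M+1) (|x 0 - x 1|/m)) := by
  have hz0 : trunc ((mkNN M m).l 0) x 0 = x 0 := by rw [mk_l0]; simp [trunc]
  have hz1 : trunc ((mkNN M m).l 0) x 1 = x 1 := by rw [mk_l0]; simp [trunc]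
  show (mkNN M m).aff (M+2) (NN.hidden ReLU (mkNN M m) (M+2) (trunc ((mkNN M m).l 0) x)) 0 = _
  rw [NN.aff, mk_lmid M m (by omega) (by omega), mk_Vout, mk_bout]
  rw [Finset.sum_range_succ, Finset.sum_range_succ, Finset.sum_range_succ,
    Finset.sum_range_succ, Finset.sum_range_succ, Finset.sum_range_succ,
    Finset.sum_range_succ, Finset.sum_range_one]
  have hs := hidden_state M hm (trunc ((mkNN M m).l 0) x) M le_rfl
  rw [hs 0 (by norm_num), hs 1 (by norm_num), hs 2 (by norm_num), hs 3 (by norm_num),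
    hs 4 (by norm_num), hs 5 (by norm_num), hs 6 (by norm_num), hs 7 (by norm_num),
    hz0, hz1]
  simp only [Vout, ES]
  norm_num
  rw [fApp_succ, fApp_succ, sawIter_succ, sawIter_succ, saw, saw]
  ring

lemma realAs_eq (M : ℕ) {m : ℝ} (hm : 0 < m) (x : EuclideanSpace ℝ (Fin 2)) (i : Fin 1) :
    (mkNN M m).realAs ReLU 2 1 x i =
      m^2/4 * (fApp (M+1) (|x 0 + x 1|/m) - fApp (M+1) (|x 0 - x 1|/m)) := by
  have hi : (i : ℕ) = 0 := by omega
  show (mkNN M m).fullReal ReLU (emb 2 x) i = _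
  rw [hi, fullReal_eq M hm]
  have h0 : emb 2 x 0 = x 0 := by simp [emb]
  have h1 : emb 2 x 1 = x 1 := by simp [emb]
  rw [h0, h1]

lemma mk_P (M : ℕ) (m : ℝ) : (mkNN M m).P = 72 * M + 61 := by
  have hd : (mkNN M m).depth = M + 3 := rfl
  rw [NN.P, hd, Finset.sum_range_succ', Finset.sum_range_succ', Finset.sum_range_succ]
  have hmid : ∀ i ∈ Finset.range M,
      (mkNN M m).l (i+1+1+1) * ((mkNN M m).l (i+1+1) + 1) = 72 := by
    intro i hi
    rw [Finset.mem_range] at hi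
    rw [mk_lmid M m (by omega) (by omega), mk_lmid M m (by omega) (by omega)]
  rw [Finset.sum_congr rfl hmid, Finset.sum_const, Finset.card_range]
  rw [show M+1+1+1 = M+3 from rfl, mk_lout, mk_lmid M m (by omega) (by omega)]
  rw [show (0:ℕ)+1+1 = 2 from rfl, show (0:ℕ)+1 = 1 from rfl,
    mk_lmid M m (by omega) (by omega), mk_l1, mk_l0]
  simp only [smul_eq_mul]
  omega
lemma Phi_lip (M : ℕ) {m : ℝ} (hm : 0 < m) (x0 x1 y0 y1 : ℝ) :
    |m^2/4 * (fApp (M+1) (|x0 + x1|/m) - fApp (M+1) (|x0 - x1|/m))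
      - m^2/4 * (fApp (M+1) (|y0 + y1|/m) - fApp (M+1) (|y0 - y1|/m))|
      ≤ m * (|x0 - y0| + |x1 - y1|) := by
  have key : ∀ a b : ℝ, |fApp (M+1) (|a|/m) - fApp (M+1) (|b|/m)| ≤ 2 * |a - b| / m := by
    intro a b
    refine (fApp_lip _ _ _).trans ?_
    rw [div_sub_div_same, abs_div, abs_of_pos hm, mul_div_assoc]
    have h := abs_abs_sub_abs_le_abs_sub a b
    gcongr
  have h1 := key (x0 + x1) (y0 + y1)
  have h2 := key (x0 - x1) (y0 - y1)
  have e1 : |(x0 + x1) - (y0 + y1)| ≤ |x0 - y0| + |x1 - y1| := by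
    rw [show (x0 + x1) - (y0 + y1) = (x0 - y0) + (x1 - y1) by ring]
    exact abs_add_le _ _
  have e2 : |(x0 - x1) - (y0 - y1)| ≤ |x0 - y0| + |x1 - y1| := by
    rw [show (x0 - x1) - (y0 - y1) = (x0 - y0) - (x1 - y1) by ring]
    exact abs_sub _ _
  have hm2 : (0:ℝ) < m^2/4 := by positivity
  calc |m^2/4 * (fApp (M+1) (|x0 + x1|/m) - fApp (M+1) (|x0 - x1|/m))
      - m^2/4 * (fApp (M+1) (|y0 + y1|/m) - fApp (M+1) (|y0 - y1|/m))|
      = m^2/4 * |(fApp (M+1) (|x0 + x1|/m) - fApp (M+1) (|y0 + y1|/m))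
          - (fApp (M+1) (|x0 - x1|/m) - fApp (M+1) (|y0 - y1|/m))| := by
        rw [← mul_sub, abs_mul, abs_of_pos hm2]
        congr 1
        congr 1
        ring
    _ ≤ m^2/4 * (|fApp (M+1) (|x0 + x1|/m) - fApp (M+1) (|y0 + y1|/m)|
          + |fApp (M+1) (|x0 - x1|/m) - fApp (M+1) (|y0 - y1|/m)|) := by
        have := abs_sub (fApp (M+1) (|x0 + x1|/m) - fApp (M+1) (|y0 + y1|/m))
          (fApp (M+1) (|x0 - x1|/m) - fApp (M+1) (|y0 - y1|/m))
        gcongr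
    _ ≤ m^2/4 * (2 * (|x0 - y0| + |x1 - y1|) / m + 2 * (|x0 - y0| + |x1 - y1|) / m) := by
        gcongr <;> [exact h1.trans (by gcongr); exact h2.trans (by gcongr)]
    _ = m * (|x0 - y0| + |x1 - y1|) := by field_simp; ring

lemma Phi_err (M : ℕ) {r x0 x1 : ℝ} (hr : 0 < r) (h0 : |x0| ≤ r) (h1 : |x1| ≤ r) :
    |x0 * x1 - (2*r)^2/4 * (fApp (M+1) (|x0 + x1|/(2*r)) - fApp (M+1) (|x0 - x1|/(2*r)))|
      ≤ r^2 / 4^(M+2) := by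
  have h2r : (0:ℝ) < 2*r := by linarith
  have habs0 := abs_nonneg (x0 + x1)
  have habs0' := abs_nonneg (x0 - x1)
  have hb1 : |x0 + x1| ≤ 2*r := (abs_add_le _ _).trans (by linarith)
  have hb2 : |x0 - x1| ≤ 2*r := (abs_sub _ _).trans (by linarith)
  set tu := |x0 + x1|/(2*r) with htu
  set tv := |x0 - x1|/(2*r) with htv
  have htu01 : 0 ≤ tu ∧ tu ≤ 1 := ⟨by positivity, by rw [htu, div_le_one h2r]; exact hb1⟩
  have htv01 : 0 ≤ tv ∧ tv ≤ 1 := ⟨by positivity, by rw [htv, div_le_one h2r]; exact hb2⟩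
  obtain ⟨hu1, hu2⟩ := fApp_err htu01.1 htu01.2 (M+1)
  obtain ⟨hv1, hv2⟩ := fApp_err htv01.1 htv01.2 (M+1)
  have hsq_u : (2*r)^2/4 * tu^2 = (x0 + x1)^2/4 := by
    rw [htu, div_pow, sq_abs]; field_simp
  have hsq_v : (2*r)^2/4 * tv^2 = (x0 - x1)^2/4 := by
    rw [htv, div_pow, sq_abs]; field_simp
  have hexp : x0 * x1 - (2*r)^2/4 * (fApp (M+1) tu - fApp (M+1) tv)
      = (2*r)^2/4 * ((fApp (M+1) tv - tv^2) - (fApp (M+1) tu - tu^2)) := by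
    have : x0 * x1 = (x0+x1)^2/4 - (x0-x1)^2/4 := by ring
    rw [this, ← hsq_u, ← hsq_v]; ring
  rw [hexp, abs_mul, abs_of_pos (by positivity : (0:ℝ) < (2*r)^2/4)]
  have hd : |(fApp (M+1) tv - tv^2) - (fApp (M+1) tu - tu^2)| ≤ 1/4^(M+2) := by
    rw [abs_sub_le_iff]
    constructor <;> nlinarith
  calc (2*r)^2/4 * |(fApp (M+1) tv - tv^2) - (fApp (M+1) tu - tu^2)|
      ≤ (2*r)^2/4 * (1/4^(M+2)) := by gcongr
    _ = r^2 / 4^(M+2) := by ring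

lemma euclid2 (w : EuclideanSpace ℝ (Fin 2)) : |w 0| + |w 1| ≤ Real.sqrt 2 * ‖w‖ := by
  rw [EuclideanSpace.norm_eq, Fin.sum_univ_two]
  rw [← Real.sqrt_mul (by norm_num : (0:ℝ) ≤ 2)]
  have h : (|w 0| + |w 1|)^2 ≤ 2 * (‖w 0‖^2 + ‖w 1‖^2) := by
    simp only [Real.norm_eq_abs, sq_abs]
    nlinarith [sq_nonneg (|w 0| - |w 1|), sq_abs (w 0), sq_abs (w 1), abs_nonneg (w 0), abs_nonneg (w 1)]
  exact (Real.le_sqrt (by positivity) (by positivity)).mpr h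
lemma euclid1 (w : EuclideanSpace ℝ (Fin 1)) : ‖w‖ = |w 0| := by
  rw [EuclideanSpace.norm_eq, Fin.sum_univ_one, Real.norm_eq_abs, sq_abs,
    Real.sqrt_sq_eq_abs]

/-- Proposition 4.4: approximation cost of the product function on `[-r, r]²`
with ReLU networks and constant weight function `1`. -/
theorem product_function_approximation_cost (r ε : ℝ) (hr : 0 < r)
    (hε0 : 0 < ε) (hε1 : ε ≤ 1 / 2) :
    Cost ReLU (fun _ => 1) prodFun
        {x : EuclideanSpace ℝ (Fin 2) | |x 0| ≤ r ∧ |x 1| ≤ r}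
        (Real.sqrt 8 * r) ε ≤
      ENNReal.ofReal (max 208 (320 * Real.logb 2 r + 160 * Real.logb 2 ε⁻¹ + 48)) := by
  have hm : (0:ℝ) < 2*r := by linarith
  set c : ℝ := Real.logb 2 r + Real.logb 2 ε⁻¹ / 2 - 1/2 with hc
  set M : ℕ := ⌈c⌉₊ + 1 with hM
  set φ := mkNN M (2*r) with hφ
  have hεinv : (0:ℝ) < ε⁻¹ := by positivity
  -- the power estimate
  have h24 : (2:ℝ)^(2:ℝ) = 4 := by
    have hcast : ((2:ℕ):ℝ) = (2:ℝ) := by norm_num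
    calc (2:ℝ)^(2:ℝ) = (2:ℝ)^(((2:ℕ)):ℝ) := by rw [hcast]
      _ = (2:ℝ)^(2:ℕ) := Real.rpow_natCast 2 2
      _ = 4 := by norm_num
  have key : (2:ℝ)^(2*(c+3)) = 32 * r^2 / ε := by
    have e1 : (2:ℝ)^(Real.logb 2 (r^2 * ε⁻¹ * 32)) = r^2 * ε⁻¹ * 32 :=
      Real.rpow_logb two_pos (by norm_num) (by positivity)
    have e2 : 2*(c+3) = Real.logb 2 (r^2 * ε⁻¹ * 32) := by
      rw [Real.logb_mul (by positivity) (by norm_num),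
        Real.logb_mul (by positivity) (by positivity)]
      have h32 : Real.logb 2 32 = 5 := by
        rw [show (32:ℝ) = 2^(5:ℕ) by norm_num, Real.logb_pow, Real.logb_self_eq_one] <;>
          norm_num
      have hr2 : Real.logb 2 (r^2) = 2 * Real.logb 2 r := by
        rw [show (r:ℝ)^2 = r^(2:ℕ) from rfl, Real.logb_pow]; norm_num
      rw [h32, hr2, hc]; ring
    rw [e2, e1]; field_simp
  have h4c : (4:ℝ)^(c+3) = 32 * r^2 / ε := by
    rw [← h24, ← Real.rpow_mul (by norm_num : (0:ℝ) ≤ 2)]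
    exact key
  have hpow : 32 * r^2 / ε ≤ (4:ℝ)^(M+2) := by
    have h4 : ((4:ℝ))^(M+2) = (4:ℝ)^(((M+2 : ℕ)) : ℝ) := (Real.rpow_natCast 4 (M+2)).symm
    rw [h4, ← h4c]
    apply Real.rpow_le_rpow_left_iff (by norm_num : (1:ℝ) < 4) |>.mpr
    have hle := Nat.le_ceil c
    have hMc : ((M:ℕ):ℝ) = (⌈c⌉₊:ℝ) + 1 := by rw [hM]; push_cast; ring
    push_cast
    linarith
  have herr : r^2/(4:ℝ)^(M+2) ≤ ε := by
    have h32 : (0:ℝ) < 32*r^2/ε := by positivity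
    calc r^2/(4:ℝ)^(M+2) ≤ r^2/(32*r^2/ε) := by gcongr
      _ = ε/32 := by field_simp
      _ ≤ ε := by linarith
  have hcond : φ.l 0 = 2 ∧ φ.l φ.depth = 1 ∧
      (∀ x y : EuclideanSpace ℝ (Fin 2),
        ‖φ.realAs ReLU 2 1 x - φ.realAs ReLU 2 1 y‖ ≤ Real.sqrt 8 * r * ‖x - y‖) ∧
      ∀ x ∈ {x : EuclideanSpace ℝ (Fin 2) | |x 0| ≤ r ∧ |x 1| ≤ r},
        (1:ℝ) * ‖(show EuclideanSpace ℝ (Fin 1) from WithLp.toLp 2 fun _ => x 0 * x 1) - φ.realAs ReLU 2 1 x‖ ≤ ε := by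
    refine ⟨rfl, mk_lout M (2*r), ?_, ?_⟩
    · intro x y
      rw [euclid1]
      have hsub : (φ.realAs ReLU 2 1 x - φ.realAs ReLU 2 1 y) 0
          = φ.realAs ReLU 2 1 x 0 - φ.realAs ReLU 2 1 y 0 := rfl
      rw [hsub, realAs_eq M hm x 0, realAs_eq M hm y 0]
      refine (Phi_lip M hm (x 0) (x 1) (y 0) (y 1)).trans ?_
      have h2 := euclid2 (x - y)
      have hxy0 : (x - y) 0 = x 0 - y 0 := rfl
      have hxy1 : (x - y) 1 = x 1 - y 1 := rfl
      rw [hxy0, hxy1] at h2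
      have hs8 : Real.sqrt 8 = 2 * Real.sqrt 2 := by
        rw [show (8:ℝ) = 2^2*2 by norm_num, Real.sqrt_mul (by positivity) 2,
          Real.sqrt_sq (by norm_num : (0:ℝ) ≤ 2)]
      calc 2*r * (|x 0 - y 0| + |x 1 - y 1|) ≤ 2*r * (Real.sqrt 2 * ‖x - y‖) := by
            have hr2 : (0:ℝ) ≤ 2*r := by linarith
            exact mul_le_mul_of_nonneg_left h2 hr2
        _ = Real.sqrt 8 * r * ‖x - y‖ := by rw [hs8]; ring
    · intro x hx
      obtain ⟨hx0, hx1⟩ := hx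
      rw [one_mul, euclid1]
      have hsub : ((show EuclideanSpace ℝ (Fin 1) from WithLp.toLp 2 fun _ => x 0 * x 1) - φ.realAs ReLU 2 1 x) 0
          = x 0 * x 1 - φ.realAs ReLU 2 1 x 0 := rfl
      rw [hsub, realAs_eq M hm x 0]
      exact le_trans (Phi_err M hr hx0 hx1) herr
  calc Cost ReLU (fun _ => 1) prodFun
        {x : EuclideanSpace ℝ (Fin 2) | |x 0| ≤ r ∧ |x 1| ≤ r} (Real.sqrt 8 * r) ε
      ≤ (φ.P : ℝ≥0∞) := iInf₂_le φ hcond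
    _ ≤ ENNReal.ofReal (max 208 (320 * Real.logb 2 r + 160 * Real.logb 2 ε⁻¹ + 48)) := by
      rw [← ENNReal.ofReal_natCast]
      apply ENNReal.ofReal_le_ofReal
      rw [hφ, mk_P]
      have hMr : ((72 * M + 61 : ℕ) : ℝ) = 72 * ((⌈c⌉₊:ℝ) + 1) + 61 := by
        rw [hM]; push_cast; ring
      rw [hMr]
      rcases le_or_gt c 0 with hc0 | hc0
      · have hz : ⌈c⌉₊ = 0 := Nat.ceil_eq_zero.mpr hc0
        rw [hz]
        refine le_trans ?_ (le_max_left _ _)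
        norm_num
      · refine le_trans ?_ (le_max_right _ _)
        have h1 : (⌈c⌉₊:ℝ) ≤ c + 1 := by
          have := Nat.ceil_lt_add_one (le_of_lt hc0)
          linarith
        have heq : 320 * Real.logb 2 r + 160 * Real.logb 2 ε⁻¹ + 48 = 320*c + 208 := by
          rw [hc]; ring
        rw [heq]
        linarith

end
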